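/- For every integer p ≥ 1, every finite graph G with χ(G) > p has an induced subgraph F with minimum degree at least p and χ(F) ≥ χ(G) − p. -/

import Mathlib

open SimpleGraph

/-- The chromatic number of the subgraph of `G` induced on `S`, as a natural number. -/
noncomputable def chiSet {V : Type*} (G : SimpleGraph V) (S : Set V) : ℕ :=
  (G.induce S).chromaticNumber.toNat

/-- The chromatic number of `G`, as a natural number. -/
noncomputable def chi {V : Type*} (G : SimpleGraph V) : ℕ :=
  G.chromaticNumber.toNat

/-- `(A, B)` is an anticomplete pair: no edge of `G` joins `A` and `B`. -/
def Anticomplete {V : Type*} (G : SimpleGraph V) (A B : Set V) : Prop :=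
  ∀ a ∈ A, ∀ b ∈ B, ¬ G.Adj a b

/-- `G` is `H`-free: no induced subgraph of `G` is isomorphic to `H`. -/
def FreeOf {V W : Type*} (G : SimpleGraph V) (H : SimpleGraph W) : Prop :=
  IsEmpty (H ↪g G)

/-- For every integer `p ≥ 1`, every finite graph `G` with `χ(G) > p` has an
induced subgraph `F = G[S]` with minimum degree at least `p` and `χ(F) ≥ χ(G) − p`. -/

lemma chrom_ne_top {W : Type*} [Fintype W] (H : SimpleGraph W) : H.chromaticNumber ≠ ⊤ :=
  (lt_of_le_of_lt H.colorable_of_fintype.chromaticNumber_le (WithTop.coe_lt_top _)).ne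

lemma toNat_le_iff_colorable {W : Type*} [Fintype W] (H : SimpleGraph W) (n : ℕ) :
    H.chromaticNumber.toNat ≤ n ↔ H.Colorable n := by
  conv_rhs => rw [← chromaticNumber_le_iff_colorable, ← ENat.coe_toNat (chrom_ne_top H), Nat.cast_le]

lemma chrom_iso_eq {V W : Type*} {G : SimpleGraph V} {H : SimpleGraph W} (e : G ≃g H) :
    G.chromaticNumber = H.chromaticNumber :=
  le_antisymm (chromaticNumber_mono_of_hom e.toEmbedding.toHom)
    (chromaticNumber_mono_of_hom e.symm.toEmbedding.toHom)

lemma extend_coloring {V : Type*} [Fintype V] [DecidableEq V] (G : SimpleGraph V)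
    [DecidableRel G.Adj] (S : Finset V) (u : V) (hu : u ∈ S) (m : ℕ)
    (hdeg : (G.neighborSet u ∩ (S : Set V)).ncard < m)
    (hcol : (G.induce ((S.erase u : Finset V) : Set V)).Colorable m) :
    (G.induce (S : Set V)).Colorable m := by
  obtain ⟨C⟩ := hcol
  -- colors used by neighbors of u
  set T : Finset (Fin m) :=
    ((S.erase u).attach.filter (fun v => G.Adj u v.1)).image
      (fun v => C ⟨v.1, Finset.mem_coe.mpr v.2⟩) with hT
  have hcard : T.card < m := by
    have h1 : T.card ≤ ((S.erase u).attach.filter (fun v => G.Adj u v.1)).card :=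
      Finset.card_image_le
    have h2 : ((S.erase u).attach.filter (fun v => G.Adj u v.1)).card
        ≤ (S.filter (fun v => G.Adj u v)).card := by
      apply Finset.card_le_card_of_injOn (fun v => v.1)
      · intro v hv
        simp only [Finset.coe_filter, Set.mem_setOf_eq, Finset.mem_attach, true_and] at hv
        exact Finset.mem_filter.mpr ⟨Finset.mem_of_mem_erase v.2, hv⟩
      · intro a _ b _ hab
        exact Subtype.ext hab
    have h3 : (S.filter (fun v => G.Adj u v)).card
        = (G.neighborSet u ∩ (S : Set V)).ncard := by
      rw [← Set.ncard_coe_finset]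
      congr 1
      ext v
      simp [Set.mem_inter_iff, and_comm, mem_neighborSet]
    omega
  have : ∃ c : Fin m, c ∉ T := by
    by_contra h
    push_neg at h
    have : T = Finset.univ := Finset.eq_univ_iff_forall.mpr h
    rw [this, Finset.card_univ, Fintype.card_fin] at hcard
    omega
  obtain ⟨c, hc⟩ := this
  refine ⟨Coloring.mk (fun v => if h : (v : V) = u then c
    else C ⟨v.1, Finset.mem_coe.mpr (Finset.mem_erase.mpr ⟨h, Finset.mem_coe.mp v.2⟩)⟩) ?_⟩
  rintro ⟨a, ha⟩ ⟨b, hb⟩ hab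
  have hadj : G.Adj a b := hab
  by_cases hau : a = u <;> by_cases hbu : b = u
  · exact absurd (hau ▸ hbu ▸ hadj) (G.irrefl)
  · simp only [hau, dif_pos, dif_neg hbu]
    intro heq
    apply hc
    rw [hT, heq]
    apply Finset.mem_image.mpr
    refine ⟨⟨b, Finset.mem_erase.mpr ⟨hbu, Finset.mem_coe.mp hb⟩⟩, ?_, rfl⟩
    simp only [Finset.mem_filter, Finset.mem_attach, true_and]
    exact hau ▸ hadj
  · simp only [hbu, dif_pos, dif_neg hau]
    intro heq
    apply hc
    rw [hT, ← heq]
    apply Finset.mem_image.mpr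
    refine ⟨⟨a, Finset.mem_erase.mpr ⟨hau, Finset.mem_coe.mp ha⟩⟩, ?_, rfl⟩
    simp only [Finset.mem_filter, Finset.mem_attach, true_and]
    exact hbu ▸ hadj.symm
  · simp only [dif_neg hau, dif_neg hbu]
    exact C.valid hadj

theorem stmt_1 {V : Type*} [Fintype V] (G : SimpleGraph V) (p : ℕ) (hp : 1 ≤ p)
    (hchi : p < chi G) :
    ∃ S : Set V, (∀ u ∈ S, p ≤ (G.neighborSet u ∩ S).ncard) ∧
      chi G - p ≤ chiSet G S := by
  classical
  have hPuniv : ∃ n, ∃ S : Finset V, S.card = n ∧ chi G ≤ chiSet G (S : Set V) := by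
    refine ⟨(Finset.univ : Finset V).card, Finset.univ, rfl, ?_⟩
    unfold chi chiSet
    rw [Finset.coe_univ, chrom_iso_eq G.induceUnivIso]
  set n := Nat.find hPuniv with hn
  obtain ⟨S, hScard, hSchi⟩ := Nat.find_spec hPuniv
  refine ⟨(S : Set V), ?_, le_trans (Nat.sub_le _ _) hSchi⟩
  intro u huS
  by_contra hlt
  push_neg at hlt
  have huS' : u ∈ S := Finset.mem_coe.mp huS
  have hcard' : (S.erase u).card < n := by
    rw [hn, ← hScard]
    exact Finset.card_erase_lt_of_mem huS'
  have hnot := Nat.find_min hPuniv (hn ▸ hcard')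
  push_neg at hnot
  have hS'lt : chiSet G ((S.erase u : Finset V) : Set V) < chi G := by
    have := hnot (S.erase u) rfl
    omega
  have hcol' : (G.induce ((S.erase u : Finset V) : Set V)).Colorable (chi G - 1) := by
    rw [← toNat_le_iff_colorable]
    exact Nat.le_sub_one_of_lt hS'lt
  have hcol : (G.induce (S : Set V)).Colorable (chi G - 1) :=
    extend_coloring G S u huS' (chi G - 1) (by omega) hcol'
  have : chiSet G (S : Set V) ≤ chi G - 1 := (toNat_le_iff_colorable _ _).mpr hcol
  omega
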